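/- Let s be a finite nonempty set of directions at a vertex, α ∈ (0, 2π), and define v^{(s)} := max_{j ∈ s} |{k ∈ s : (θ_k − θ_j) mod 2π ≤ α}|. Then for any angle φ, the number of directions θ ∈ s with (θ − φ) mod 2π ≤ α is at most v^{(s)}. Consequently, any subset of s that satisfies the α-angular constraint (i.e., is enclosable by an α-sector) has cardinality at most v^{(s)}. -/

import Mathlib

open Real

noncomputable def amod (x : ℝ) : ℝ := toIcoMod Real.two_pi_pos 0 x

noncomputable def ang (a b : ℝ) : ℝ := amod (b - a)

lemma amod_mem : ∀ x : ℝ, amod x ∈ Set.Ico 0 (2 * π) := by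
  intro x
  have := toIcoMod_mem_Ico Real.two_pi_pos 0 x
  simpa [amod] using this

lemma ang_shift (φ j k : ℝ) (h : ang φ j ≤ ang φ k) : ang j k ≤ ang φ k := by
  simp only [ang, amod] at h ⊢
  have ha := toIcoMod_mem_Ico Real.two_pi_pos 0 (j - φ)
  have hb := toIcoMod_mem_Ico Real.two_pi_pos 0 (k - φ)
  simp only [zero_add] at ha hb
  have h1 := self_sub_toIcoMod Real.two_pi_pos 0 (k - φ)
  have h2 := self_sub_toIcoMod Real.two_pi_pos 0 (j - φ)
  have e1 : toIcoMod Real.two_pi_pos 0 (k - j) =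
      toIcoMod Real.two_pi_pos 0
        (toIcoMod Real.two_pi_pos 0 (k - φ) - toIcoMod Real.two_pi_pos 0 (j - φ)) :=
    (toIcoMod_eq_toIcoMod Real.two_pi_pos).2
      ⟨toIcoDiv Real.two_pi_pos 0 (j - φ) - toIcoDiv Real.two_pi_pos 0 (k - φ),
        by rw [sub_zsmul]; linarith⟩
  have e2 : toIcoMod Real.two_pi_pos 0
      (toIcoMod Real.two_pi_pos 0 (k - φ) - toIcoMod Real.two_pi_pos 0 (j - φ)) =
      toIcoMod Real.two_pi_pos 0 (k - φ) - toIcoMod Real.two_pi_pos 0 (j - φ) :=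
    (toIcoMod_eq_self Real.two_pi_pos).2
      ⟨by linarith, by simp only [zero_add]; linarith [hb.2, ha.1]⟩
  rw [e1, e2]
  linarith [ha.1]

theorem stmt6 (s : Finset ℝ) (hs : s.Nonempty) (hsub : ∀ θ ∈ s, θ ∈ Set.Ico 0 (2 * π))
    (α : ℝ) (hα : α ∈ Set.Ioo 0 (2 * π)) :
    (∀ φ : ℝ, (s.filter fun k => ang φ k ≤ α).card ≤
        s.sup' hs fun j => (s.filter fun k => ang j k ≤ α).card) ∧
      ∀ A ⊆ s, (∃ φ : ℝ, ∀ θ ∈ A, ang φ θ ≤ α) →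
        A.card ≤ s.sup' hs fun j => (s.filter fun k => ang j k ≤ α).card := by
  have main : ∀ φ : ℝ, (s.filter fun k => ang φ k ≤ α).card ≤
      s.sup' hs fun j => (s.filter fun k => ang j k ≤ α).card := by
    intro φ
    set T := s.filter fun k => ang φ k ≤ α with hT
    rcases T.eq_empty_or_nonempty with he | hne
    · rw [he]
      simp only [Finset.card_empty]
      exact Nat.zero_le _
    · obtain ⟨j, hjT, hjmin⟩ := T.exists_min_image (fun k => ang φ k) hne
      have hjs : j ∈ s := (Finset.mem_filter.1 hjT).1
      have hsubT : T ⊆ s.filter fun k => ang j k ≤ α := by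
        intro k hk
        have hks := Finset.mem_filter.1 hk
        refine Finset.mem_filter.2 ⟨hks.1, ?_⟩
        have := ang_shift φ j k (hjmin k hk)
        linarith [hks.2]
      calc T.card ≤ (s.filter fun k => ang j k ≤ α).card := Finset.card_le_card hsubT
        _ ≤ s.sup' hs fun j => (s.filter fun k => ang j k ≤ α).card :=
          Finset.le_sup' (fun j => (s.filter fun k => ang j k ≤ α).card) hjs
  refine ⟨main, ?_⟩
  intro A hA ⟨φ, hφ⟩
  have : A ⊆ s.filter fun k => ang φ k ≤ α := fun k hk =>
    Finset.mem_filter.2 ⟨hA hk, hφ k hk⟩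
  exact le_trans (Finset.card_le_card this) (main φ)
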